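/- arXiv:2410.14463 — 2 statements merged into one kernel-verified Lean document; each statement's English description precedes it below -/
import Mathlib

section
/- Every quantum configuration (O,C) in which all pairs of observables of O mutually commute is non-contextual. -/
open scoped Classical
open Matrix

noncomputable section

/-- The space of `n`-qubit operators, realized as matrices indexed by
`Fin n → Fin 2` (the `n`-fold tensor-product index). -/
abbrev QMat (n : ℕ) := Matrix (Fin n → Fin 2) (Fin n → Fin 2) ℂ

/-- The four Pauli matrices `I, X, Y, Z`. -/
def pauliMat : Fin 4 → Matrix (Fin 2) (Fin 2) ℂ
  | ⟨0, _⟩ => 1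
  | ⟨1, _⟩ => !![0, 1; 1, 0]
  | ⟨2, _⟩ => !![0, -Complex.I; Complex.I, 0]
  | ⟨3, _⟩ => !![1, 0; 0, -1]

/-- The `n`-fold Kronecker (tensor) product `G₁ ⊗ ⋯ ⊗ Gₙ` of the Pauli matrices
selected by `g : Fin n → Fin 4`, as a matrix indexed by `Fin n → Fin 2`. -/
def nPauli {n : ℕ} (g : Fin n → Fin 4) : QMat n :=
  Matrix.of fun r c => ∏ k, pauliMat (g k) (r k) (c k)

/-- `M` is an `n`-qubit Pauli observable. -/
def IsPauliObs (n : ℕ) (M : QMat n) : Prop := ∃ g : Fin n → Fin 4, M = nPauli g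

/-- `I^⊗n`, the `n`-fold tensor product of the identity. -/
def idN (n : ℕ) : QMat n := nPauli (fun _ => ⟨0, by omega⟩)

/-- Product of `f` over a finite set of naturals, taken in increasing order
(well-defined without commutativity; agrees with the unordered product when the
factors pairwise commute). -/
def natFinsetProd {M : Type*} [Monoid M] (s : Finset ℕ) (f : ℕ → M) : M :=
  ((s.sort (· ≤ ·)).map f).prod

/-- `(V,H,G)` is a hypergram: `V` a nonempty finite vertex set, `H` a set of
nonempty hyperedges covering `V`, `G` a set of 2-element edges on `V` forming a
simple reduced graph, no edge of `G` being contained in a hyperedge of `H`. -/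
def IsHypergram (V : Finset ℕ) (H G : Finset (Finset ℕ)) : Prop :=
  V.Nonempty ∧
  (∀ h ∈ H, h ⊆ V ∧ h.Nonempty) ∧
  (∀ v ∈ V, ∃ h ∈ H, v ∈ h) ∧
  (∀ e ∈ G, e ⊆ V ∧ e.card = 2) ∧
  (∀ v ∈ V, ∃ e ∈ G, v ∈ e) ∧
  (∀ v ∈ V, ∀ w ∈ V,
    (∀ u ∈ V, (({v, u} : Finset ℕ) ∈ G ↔ ({w, u} : Finset ℕ) ∈ G)) → v = w) ∧
  (∀ e ∈ G, ∀ h ∈ H, ¬ e ⊆ h)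

/-- `α` is an `n`-qubit Pauli assignment of the hypergram `(V,H,G)`. -/
def IsPauliAssignment (V : Finset ℕ) (H G : Finset (Finset ℕ)) (n : ℕ)
    (α : ℕ → QMat n) : Prop :=
  (∀ v ∈ V, IsPauliObs n (α v)) ∧
  (∀ v ∈ V, α v ≠ idN n) ∧
  (∀ v₁ ∈ V, ∀ v₂ ∈ V, α v₁ = α v₂ → v₁ = v₂) ∧
  (∀ v₁ ∈ V, ∀ v₂ ∈ V, v₁ ≠ v₂ →
    (α v₁ * α v₂ = -(α v₂ * α v₁) ↔ ({v₁, v₂} : Finset ℕ) ∈ G)) ∧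
  (∀ h ∈ H, natFinsetProd h α = idN n ∨ natFinsetProd h α = -(idN n))

/-- The sign `sgn_α(h) ∈ {−1,1}` of a hyperedge `h`: `∏_{v∈h} α(v) = sgn_α(h)·I^⊗n`. -/
def quantumSgn {n : ℕ} (α : ℕ → QMat n) (h : Finset ℕ) : ℤ :=
  if natFinsetProd h α = idN n then 1 else -1

/-- The sign `sgn_a(h) = ∏_{v∈h} a(v)` of a hyperedge for a classical assignment. -/
def classicalSgn (a : ℕ → ℤ) (h : Finset ℕ) : ℤ := ∏ v ∈ h, a v

/-- The contextuality degree of a Pauli assignment: the minimum over classical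
assignments `a : V → {−1,1}` of the number of hyperedges whose signs differ. -/
def contextualityDegree {n : ℕ} (H : Finset (Finset ℕ)) (α : ℕ → QMat n) : ℕ :=
  sInf { d : ℕ | ∃ a : ℕ → ℤ, (∀ v, a v = 1 ∨ a v = -1) ∧
    d = (H.filter (fun h => quantumSgn α h ≠ classicalSgn a h)).card }

/-- The context (incidence) matrix of a hypergram over 𝔽₂. -/
def contextMatrix (V : Finset ℕ) (H : Finset (Finset ℕ)) :
    Matrix {h // h ∈ H} {v // v ∈ V} (ZMod 2) :=
  Matrix.of fun h v => if v.1 ∈ h.1 then 1 else 0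

/-- The anticommutation (adjacency) matrix of a hypergram over 𝔽₂. -/
def anticommMatrix (V : Finset ℕ) (G : Finset (Finset ℕ)) :
    Matrix {v // v ∈ V} {v // v ∈ V} (ZMod 2) :=
  Matrix.of fun i j => if ({i.1, j.1} : Finset ℕ) ∈ G then 1 else 0

/-- The standard symplectic form on `𝔽₂^{2n}`:
`⟨x,y⟩ = Σ_{k=1}^{n} (x_{2k−1} y_{2k} + x_{2k} y_{2k−1})`. -/
def sympForm (n : ℕ) (x y : Fin (2 * n) → ZMod 2) : ZMod 2 :=
  ∑ k : Fin n,
    (x ⟨2 * k.1, by have := k.2; omega⟩ * y ⟨2 * k.1 + 1, by have := k.2; omega⟩ +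
     x ⟨2 * k.1 + 1, by have := k.2; omega⟩ * y ⟨2 * k.1, by have := k.2; omega⟩)

/-- The single-qubit encoding `ψ(I)=(0,0), ψ(X)=(0,1), ψ(Y)=(1,1), ψ(Z)=(1,0)`. -/
def psi4 : Fin 4 → (ZMod 2) × (ZMod 2)
  | ⟨0, _⟩ => (0, 0)
  | ⟨1, _⟩ => (0, 1)
  | ⟨2, _⟩ => (1, 1)
  | ⟨3, _⟩ => (1, 0)

/-- The encoding `ψ` of an `n`-qubit Pauli observable (given by its tensor
factors `g`) as a vector of `𝔽₂^{2n}`, concatenating the per-factor encodings. -/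
def psiVec {n : ℕ} (g : Fin n → Fin 4) : Fin (2 * n) → ZMod 2 := fun idx =>
  if idx.1 % 2 = 0 then (psi4 (g ⟨idx.1 / 2, by have := idx.2; omega⟩)).1
  else (psi4 (g ⟨idx.1 / 2, by have := idx.2; omega⟩)).2

/-- All pairs of elements of `S` commute. -/
def PairComm {n : ℕ} (S : Finset (QMat n)) : Prop := ∀ a ∈ S, ∀ b ∈ S, a * b = b * a

/-- The (well-defined) product of a finite set of pairwise commuting matrices. -/
def commProd {n : ℕ} (S : Finset (QMat n)) (h : PairComm S) : QMat n :=
  S.noncommProd id (fun a ha b hb _ => h a ha b hb)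

/-- Pairwise commutation is inherited by subsets. -/
def pairCommOfSubset {n : ℕ} {S T : Finset (QMat n)} (hST : S ⊆ T) (h : PairComm T) :
    PairComm S := fun a ha b hb => h a (hST ha) b (hST hb)

/-- `Q` (pairwise commuting) is independent: no nonempty subset has product `±I^⊗n`. -/
def IsIndep {n : ℕ} (Q : Finset (QMat n)) (hQ : PairComm Q) : Prop :=
  ∀ S : Finset (QMat n), ∀ (hS : S ⊆ Q), S.Nonempty →
    commProd S (pairCommOfSubset hS hQ) ≠ idN n ∧
    commProd S (pairCommOfSubset hS hQ) ≠ -(idN n)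

/-- The vertex set `{1, …, 15}`. -/
def V15 : Finset ℕ := Finset.Icc 1 15

/-- The 15 lines of the doily. -/
def doilyLines : Finset (Finset ℕ) :=
  { {1,2,3}, {1,8,9}, {1,10,11}, {2,4,6}, {2,5,7}, {3,12,15}, {3,13,14},
    {4,8,12}, {4,10,14}, {5,8,13}, {5,10,15}, {6,9,15}, {6,11,13},
    {7,9,14}, {7,11,12} }

/-- The 10 lines of the two-spread `H_{2s}`. -/
def twoSpreadLines : Finset (Finset ℕ) :=
  { {1,2,3}, {1,10,11}, {2,4,6}, {3,13,14}, {4,8,12}, {5,8,13}, {5,10,15},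
    {6,9,15}, {7,9,14}, {7,11,12} }

/-- The anticommutation graph `G_d = G_{2s}`: pairs of distinct vertices not on a
common doily line. -/
def doilyG : Finset (Finset ℕ) :=
  (V15.powersetCard 2).filter (fun e => ∀ h ∈ doilyLines, ¬ e ⊆ h)



/-- Auxiliary: each Pauli matrix squares to the identity. -/
lemma aux_pauliMat_sq (a : Fin 4) : pauliMat a * pauliMat a = 1 := by
  fin_cases a <;> simp [pauliMat] <;>
    ext i j <;> fin_cases i <;> fin_cases j <;>
      simp [Matrix.mul_apply, Fin.sum_univ_two, Complex.I_mul_I]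

lemma aux_nPauli_mul {n : ℕ} (g g' : Fin n → Fin 4) :
    nPauli g * nPauli g' =
      Matrix.of fun r c => ∏ k, (pauliMat (g k) * pauliMat (g' k)) (r k) (c k) := by
  ext r c
  simp only [Matrix.mul_apply, nPauli, Matrix.of_apply, ← Finset.prod_mul_distrib]
  rw [Finset.prod_univ_sum, Fintype.piFinset_univ]

lemma aux_nPauli_sq {n : ℕ} (g : Fin n → Fin 4) : nPauli g * nPauli g = 1 := by
  rw [aux_nPauli_mul]
  ext r c
  simp only [Matrix.of_apply, aux_pauliMat_sq, Matrix.one_apply]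
  by_cases h : r = c
  · subst h; simp
  · obtain ⟨k, hk⟩ := Function.ne_iff.mp h
    rw [if_neg h]
    exact Finset.prod_eq_zero (Finset.mem_univ k) (by simp [Matrix.one_apply, hk])

lemma aux_idN_eq_one (n : ℕ) : idN n = 1 := by
  ext r c
  simp only [idN, nPauli, Matrix.of_apply]
  show (∏ k, (1 : Matrix (Fin 2) (Fin 2) ℂ) (r k) (c k)) = _
  by_cases h : r = c
  · subst h; simp [Matrix.one_apply]
  · obtain ⟨k, hk⟩ := Function.ne_iff.mp h
    rw [Matrix.one_apply_ne h]
    exact Finset.prod_eq_zero (Finset.mem_univ k) (by simp [Matrix.one_apply, hk])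

/-- A finite pairwise-commuting family of matrices has a common eigenvector in any
nonzero invariant subspace. -/
lemma aux_common_eigvec {n : ℕ} (S : Finset (QMat n))
    (hc : ∀ a ∈ S, ∀ b ∈ S, a * b = b * a) :
    ∀ (W : Submodule ℂ ((Fin n → Fin 2) → ℂ)), W ≠ ⊥ →
      (∀ o ∈ S, ∀ x ∈ W, o *ᵥ x ∈ W) →
      ∃ v ∈ W, v ≠ 0 ∧ ∀ o ∈ S, ∃ μ : ℂ, o *ᵥ v = μ • v := by
  induction S using Finset.induction_on with
  | empty =>
    intro W hW _
    obtain ⟨v, hvW, hv0⟩ := Submodule.exists_mem_ne_zero_of_ne_bot hW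
    exact ⟨v, hvW, hv0, by simp⟩
  | insert o S hni ih =>
    intro W hW hinv
    have hoS : o ∈ insert o S := Finset.mem_insert_self o S
    have hmapsTo : Set.MapsTo (Matrix.mulVecLin o) W W := fun x hx => hinv o hoS x hx
    have : Nontrivial W := Submodule.nontrivial_iff_ne_bot.mpr hW
    obtain ⟨μ, hμ⟩ := Module.End.exists_eigenvalue ((Matrix.mulVecLin o).restrict hmapsTo)
    obtain ⟨w, hw⟩ := hμ.exists_hasEigenvector
    set W' : Submodule ℂ ((Fin n → Fin 2) → ℂ) :=
      W ⊓ Module.End.eigenspace (Matrix.mulVecLin o) μ with hW'def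
    have hwW' : (w : (Fin n → Fin 2) → ℂ) ∈ W' := by
      refine ⟨w.2, ?_⟩
      have := hw.apply_eq_smul
      have h2 : o *ᵥ (w : (Fin n → Fin 2) → ℂ) = μ • (w : (Fin n → Fin 2) → ℂ) := by
        have := congrArg (Subtype.val) this
        exact this
      simpa [Module.End.mem_eigenspace_iff, Matrix.mulVecLin_apply] using h2
    have hW'ne : W' ≠ ⊥ := by
      intro hbot
      have : (w : (Fin n → Fin 2) → ℂ) = 0 := by
        rw [hbot] at hwW'; simpa using hwW'
      exact hw.2 (Submodule.coe_eq_zero.mp this)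
    have hinv' : ∀ b ∈ S, ∀ x ∈ W', b *ᵥ x ∈ W' := by
      intro b hb x hx
      obtain ⟨hxW, hxE⟩ := hx
      refine ⟨hinv b (Finset.mem_insert_of_mem hb) x hxW, ?_⟩
      have hxE' : o *ᵥ x = μ • x := by
        simpa [Module.End.mem_eigenspace_iff, Matrix.mulVecLin_apply] using hxE
      have hcomm' : o * b = b * o :=
        hc o hoS b (Finset.mem_insert_of_mem hb)
      have : o *ᵥ (b *ᵥ x) = μ • (b *ᵥ x) := by
        rw [Matrix.mulVec_mulVec, hcomm', ← Matrix.mulVec_mulVec, hxE',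
          Matrix.mulVec_smul]
      simpa [Module.End.mem_eigenspace_iff, Matrix.mulVecLin_apply] using this
    obtain ⟨v, hvW', hv0, hvS⟩ :=
      ih (fun a ha b hb => hc a (Finset.mem_insert_of_mem ha) b (Finset.mem_insert_of_mem hb))
        W' hW'ne hinv'
    refine ⟨v, hvW'.1, hv0, ?_⟩
    intro b hb
    rcases Finset.mem_insert.mp hb with rfl | hb
    · exact ⟨μ, by simpa [Module.End.mem_eigenspace_iff, Matrix.mulVecLin_apply] using hvW'.2⟩
    · exact hvS b hb

lemma aux_noncommProd_mulVec {n : ℕ} (v : (Fin n → Fin 2) → ℂ) (aC : QMat n → ℂ)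
    (S : Finset (QMat n))
    (hev : ∀ o ∈ S, o *ᵥ v = aC o • v)
    (h : (S : Set (QMat n)).Pairwise fun x y => Commute (id x) (id y)) :
    (S.noncommProd id h) *ᵥ v = (∏ o ∈ S, aC o) • v := by
  induction S using Finset.induction_on with
  | empty => rw [Finset.noncommProd_empty]; simp
  | insert o S hni ih =>
    rw [Finset.noncommProd_insert_of_notMem _ _ _ _ hni, ← Matrix.mulVec_mulVec,
      ih (fun b hb => hev b (Finset.mem_insert_of_mem hb))
        (h.mono (by simp [Finset.coe_subset, Finset.subset_insert])),
      Matrix.mulVec_smul]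
    simp only [id_eq]
    rw [hev o (Finset.mem_insert_self o S), Finset.prod_insert hni, smul_smul, mul_comm]

/-- Every commutative quantum configuration is non-contextual. -/
theorem commutative_quantum_configuration_noncontextual
    (n : ℕ) (O : Finset (QMat n)) (C : Finset (Finset (QMat n)))
    (hO : O.Nonempty)
    (hObs : ∀ o ∈ O, IsPauliObs n o)
    (hneI : ∀ o ∈ O, o ≠ idN n)
    (hcomm : PairComm O)
    (hCsub : ∀ c ∈ C, c ⊆ O)
    (hCne : ∀ c ∈ C, c.Nonempty)
    (s : Finset (QMat n) → ℤ)
    (hs : ∀ c ∈ C, s c = 1 ∨ s c = -1)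
    (hprod : ∀ c (hc : c ∈ C),
      commProd c (pairCommOfSubset (hCsub c hc) hcomm) = (s c : ℂ) • idN n) :
    ∃ a : QMat n → ℤ, (∀ o ∈ O, a o = 1 ∨ a o = -1) ∧
      ∀ c ∈ C, (∏ o ∈ c, a o) = s c := by
  obtain ⟨v, -, hv0, hev⟩ := aux_common_eigvec O hcomm ⊤ bot_ne_top.symm (by simp)
  -- each eigenvalue is ±1
  have hev' : ∀ o ∈ O, ∃ μ : ℂ, (μ = 1 ∨ μ = -1) ∧ o *ᵥ v = μ • v := by
    intro o ho
    obtain ⟨μ, hμ⟩ := hev o ho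
    obtain ⟨g, rfl⟩ := hObs o ho
    have hsq : nPauli g *ᵥ (nPauli g *ᵥ v) = v := by
      rw [Matrix.mulVec_mulVec, aux_nPauli_sq, Matrix.one_mulVec]
    rw [hμ, Matrix.mulVec_smul, hμ, smul_smul] at hsq
    have hμ2 : μ * μ = 1 := by
      by_contra hne
      have : (μ * μ - 1) • v = 0 := by
        rw [sub_smul, one_smul, hsq, sub_self]
      rcases smul_eq_zero.mp this with h | h
      · exact hne (by linear_combination h)
      · exact hv0 h
    exact ⟨μ, mul_self_eq_one_iff.mp hμ2, hμ⟩
  set a : QMat n → ℤ := fun o => if o *ᵥ v = v then 1 else -1 with ha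
  have hav : ∀ o ∈ O, o *ᵥ v = (a o : ℂ) • v := by
    intro o ho
    obtain ⟨μ, hμ1, hμ⟩ := hev' o ho
    by_cases h1 : o *ᵥ v = v
    · simp [ha, h1]
    · rcases hμ1 with rfl | rfl
      · exact absurd (by simpa using hμ) h1
      · simp only [ha, h1, if_false]
        rw [hμ]
        norm_num
  refine ⟨a, fun o _ => by by_cases h : o *ᵥ v = v <;> simp [ha, h], ?_⟩
  intro c hc
  have hpc := hprod c hc
  have hmv : commProd c (pairCommOfSubset (hCsub c hc) hcomm) *ᵥ v
      = (∏ o ∈ c, (a o : ℂ)) • v := by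
    exact aux_noncommProd_mulVec v (fun o => (a o : ℂ)) c
      (fun o ho => hav o (hCsub c hc ho)) _
  rw [hpc, aux_idN_eq_one, Matrix.smul_mulVec, Matrix.one_mulVec] at hmv
  have : ((∏ o ∈ c, a o : ℤ) : ℂ) = ((s c : ℤ) : ℂ) := by
    push_cast
    by_contra hne
    have : (((s c : ℂ)) - ∏ o ∈ c, (a o : ℂ)) • v = 0 := by
      rw [sub_smul, hmv, sub_self]
    rcases smul_eq_zero.mp this with h | h
    · exact hne (by linear_combination -h)
    · exact hv0 h
  exact_mod_cast this

end
end

section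
/- Let (V,H,G) be a hypergram whose context matrix times anticommutation matrix (product over 𝔽₂) is the zero matrix. Then the rank r of the anticommutation matrix over 𝔽₂ is even, and there exists an (r/2)-qubit Pauli assignment of (V,H,G). -/
open scoped Classical
open Matrix

noncomputable section

/-! ### Auxiliary development -/

def chi4 (p : ZMod 2 × ZMod 2) : Fin 4 :=
  if p = (0,0) then 0 else if p = (0,1) then 1 else if p = (1,1) then 2 else 3

def mul4 : Fin 4 → Fin 4 → Fin 4
  | ⟨0, _⟩, ⟨0, _⟩ => 0
  | ⟨0, _⟩, ⟨1, _⟩ => 1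
  | ⟨0, _⟩, ⟨2, _⟩ => 2
  | ⟨0, _⟩, ⟨3, _⟩ => 3
  | ⟨1, _⟩, ⟨0, _⟩ => 1
  | ⟨1, _⟩, ⟨1, _⟩ => 0
  | ⟨1, _⟩, ⟨2, _⟩ => 3
  | ⟨1, _⟩, ⟨3, _⟩ => 2
  | ⟨2, _⟩, ⟨0, _⟩ => 2
  | ⟨2, _⟩, ⟨1, _⟩ => 3
  | ⟨2, _⟩, ⟨2, _⟩ => 0
  | ⟨2, _⟩, ⟨3, _⟩ => 1
  | ⟨3, _⟩, ⟨0, _⟩ => 3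
  | ⟨3, _⟩, ⟨1, _⟩ => 2
  | ⟨3, _⟩, ⟨2, _⟩ => 1
  | ⟨3, _⟩, ⟨3, _⟩ => 0

def phase4 : Fin 4 → Fin 4 → ℂ
  | ⟨0, _⟩, ⟨0, _⟩ => 1
  | ⟨0, _⟩, ⟨1, _⟩ => 1
  | ⟨0, _⟩, ⟨2, _⟩ => 1
  | ⟨0, _⟩, ⟨3, _⟩ => 1
  | ⟨1, _⟩, ⟨0, _⟩ => 1
  | ⟨1, _⟩, ⟨1, _⟩ => 1
  | ⟨1, _⟩, ⟨2, _⟩ => Complex.I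
  | ⟨1, _⟩, ⟨3, _⟩ => -Complex.I
  | ⟨2, _⟩, ⟨0, _⟩ => 1
  | ⟨2, _⟩, ⟨1, _⟩ => -Complex.I
  | ⟨2, _⟩, ⟨2, _⟩ => 1
  | ⟨2, _⟩, ⟨3, _⟩ => Complex.I
  | ⟨3, _⟩, ⟨0, _⟩ => 1
  | ⟨3, _⟩, ⟨1, _⟩ => Complex.I
  | ⟨3, _⟩, ⟨2, _⟩ => -Complex.I
  | ⟨3, _⟩, ⟨3, _⟩ => 1

lemma psi4_chi4 : ∀ p : ZMod 2 × ZMod 2, psi4 (chi4 p) = p := by decide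
lemma chi4_psi4 : ∀ a : Fin 4, chi4 (psi4 a) = a := by decide
lemma psi4_mul4 : ∀ a b, psi4 (mul4 a b) = psi4 a + psi4 b := by decide
lemma mul4_comm : ∀ a b, mul4 a b = mul4 b a := by decide
lemma mul4_self : ∀ a, mul4 a a = 0 := by decide
lemma phase4_self : ∀ a, phase4 a a = 1 := by
  intro a; fin_cases a <;> rfl

lemma pauliMat_zero : pauliMat 0 = !![1,0;0,1] := by
  show (1 : Matrix (Fin 2) (Fin 2) ℂ) = _
  ext i j; fin_cases i <;> fin_cases j <;> simp [Matrix.one_apply]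

lemma pauli_mul (a b : Fin 4) : pauliMat a * pauliMat b = phase4 a b • pauliMat (mul4 a b) := by
  fin_cases a <;> fin_cases b <;>
    simp only [show (0:Fin 4) = ⟨0,by omega⟩ from rfl, show (1:Fin 4) = ⟨1,by omega⟩ from rfl,
      show (2:Fin 4) = ⟨2,by omega⟩ from rfl, show (3:Fin 4) = ⟨3,by omega⟩ from rfl,
      pauliMat, phase4, mul4, pauliMat_zero, Matrix.mul_fin_two, Matrix.smul_of] <;>
    norm_num [Matrix.smul_cons, Matrix.smul_empty, Complex.I_mul_I] <;>
    (ext i j <;> fin_cases i <;> fin_cases j <;> simp <;> ring_nf <;> simp [Complex.I_sq])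

lemma mul4_eq_zero : ∀ a b : Fin 4, mul4 a b = 0 → a = b := by decide

lemma mul4_chi4 (a : Fin 4) (p : ZMod 2 × ZMod 2) : mul4 a (chi4 p) = chi4 (psi4 a + p) := by
  have h1 : psi4 (mul4 a (chi4 p)) = psi4 a + p := by rw [psi4_mul4, psi4_chi4]
  have := congrArg chi4 h1
  rwa [chi4_psi4] at this

variable {n : ℕ}

lemma nPauli_mul (g g' : Fin n → Fin 4) :
    nPauli g * nPauli g' =
      (∏ k, phase4 (g k) (g' k)) • nPauli (fun k => mul4 (g k) (g' k)) := by
  ext r c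
  have h1 : ∀ m : Fin n → Fin 2,
      (∏ k, pauliMat (g k) (r k) (m k)) * ∏ k, pauliMat (g' k) (m k) (c k)
        = ∏ k, (pauliMat (g k) (r k) (m k) * pauliMat (g' k) (m k) (c k)) := fun m =>
    (Finset.prod_mul_distrib).symm
  simp only [Matrix.mul_apply, nPauli, Matrix.of_apply, Matrix.smul_apply, smul_eq_mul]
  rw [Finset.sum_congr rfl (fun m _ => h1 m)]
  have h2 := (Finset.prod_univ_sum (fun _ : Fin n => (Finset.univ : Finset (Fin 2)))
    (fun k j => pauliMat (g k) (r k) j * pauliMat (g' k) j (c k))).symm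
  rw [show (Fintype.piFinset fun _ : Fin n => (Finset.univ : Finset (Fin 2))) = Finset.univ by
    ext; simp] at h2
  have h3 : ∀ k : Fin n, ∑ j, pauliMat (g k) (r k) j * pauliMat (g' k) j (c k)
      = phase4 (g k) (g' k) * pauliMat (mul4 (g k) (g' k)) (r k) (c k) := by
    intro k
    simpa [Matrix.mul_apply, Matrix.smul_apply] using
      congrFun (congrFun (pauli_mul (g k) (g' k)) (r k)) (c k)
  rw [h2, ← Finset.prod_mul_distrib]
  exact Finset.prod_congr rfl fun k _ => h3 k

lemma nPauli_zero : (nPauli (fun _ => 0) : QMat n) = 1 := by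
  ext r c
  by_cases h : r = c
  · subst h
    rw [Matrix.one_apply_eq]
    show (∏ k, pauliMat 0 (r k) (r k)) = 1
    apply Finset.prod_eq_one
    intro k _
    generalize r k = x
    fin_cases x <;> simp [pauliMat_zero]
  · obtain ⟨k, hk⟩ : ∃ k, r k ≠ c k := by
      by_contra hc; push_neg at hc; exact h (funext hc)
    rw [Matrix.one_apply_ne h]
    refine Finset.prod_eq_zero (Finset.mem_univ k) ?_
    show pauliMat 0 (r k) (c k) = 0
    revert hk
    generalize r k = x; generalize c k = y
    intro hk
    fin_cases x <;> fin_cases y <;> simp_all [pauliMat_zero]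

lemma nPauli_sq (g : Fin n → Fin 4) : nPauli g * nPauli g = 1 := by
  rw [nPauli_mul]
  have : (fun k => mul4 (g k) (g k)) = fun _ : Fin n => (0 : Fin 4) := by
    funext k; exact mul4_self (g k)
  rw [this]
  simp [phase4_self, nPauli_zero]

lemma pauli_trace : ∀ a : Fin 4, Matrix.trace (pauliMat a) = if a = 0 then 2 else 0 := by
  intro a
  fin_cases a <;> simp [Matrix.trace, pauliMat, Fin.sum_univ_two, Matrix.one_apply] <;> rfl

lemma nPauli_trace (g : Fin n → Fin 4) :
    Matrix.trace (nPauli g) = ∏ k, Matrix.trace (pauliMat (g k)) := by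
  simp only [Matrix.trace, Matrix.diag, nPauli, Matrix.of_apply, pauli_trace]
  have h2 := (Finset.prod_univ_sum (fun _ : Fin n => (Finset.univ : Finset (Fin 2)))
    (fun k j => pauliMat (g k) j j)).symm
  rw [show (Fintype.piFinset fun _ : Fin n => (Finset.univ : Finset (Fin 2))) = Finset.univ by
    ext; simp] at h2
  rw [← h2]

lemma nPauli_inj (g g' : Fin n → Fin 4) (h : nPauli g = nPauli g') : g = g' := by
  have hmul : nPauli g * nPauli g' = 1 := by rw [h, nPauli_sq]
  rw [nPauli_mul] at hmul
  by_contra hne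
  obtain ⟨k0, hk0⟩ : ∃ k, g k ≠ g' k := by
    by_contra hc; push_neg at hc; exact hne (funext hc)
  have htr := congrArg Matrix.trace hmul
  rw [Matrix.trace_smul, nPauli_trace, Matrix.trace_one] at htr
  have hz : Matrix.trace (pauliMat (mul4 (g k0) (g' k0))) = 0 := by
    rw [pauli_trace]
    simp only [ite_eq_right_iff]
    intro h0; exact absurd (mul4_eq_zero _ _ h0) hk0
  have hzz : (∏ k, Matrix.trace (pauliMat (mul4 (g k) (g' k)))) = 0 :=
    Finset.prod_eq_zero (Finset.mem_univ k0) hz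
  rw [hzz] at htr
  simp at htr
  exact pow_ne_zero n (two_ne_zero) htr.symm

def m1 (s : ZMod 2) : ℂ := if s = 0 then 1 else -1

lemma m1_add (s t : ZMod 2) : m1 (s + t) = m1 s * m1 t := by
  rcases (show ∀ x : ZMod 2, x = 0 ∨ x = 1 by decide) s with rfl | rfl <;>
  rcases (show ∀ x : ZMod 2, x = 0 ∨ x = 1 by decide) t with rfl | rfl <;>
  simp [m1, show (1:ZMod 2) + 1 = 0 from rfl]

lemma m1_sum {ι : Type*} (s : Finset ι) (f : ι → ZMod 2) :
    ∏ i ∈ s, m1 (f i) = m1 (∑ i ∈ s, f i) := by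
  classical
  induction s using Finset.induction_on with
  | empty => simp [m1]
  | insert a s hni ih =>
    rw [Finset.prod_insert hni, Finset.sum_insert hni, m1_add, ih]

def eps4 (a b : Fin 4) : ZMod 2 :=
  (psi4 a).1 * (psi4 b).2 + (psi4 a).2 * (psi4 b).1

lemma phase4_swap : ∀ a b, phase4 a b = m1 (eps4 a b) * phase4 b a := by
  intro a b
  fin_cases a <;> fin_cases b <;> norm_num [phase4, eps4, psi4, m1] <;> rfl

lemma nPauli_swap (g g' : Fin n → Fin 4) :
    nPauli g * nPauli g' = m1 (∑ k, eps4 (g k) (g' k)) • (nPauli g' * nPauli g) := by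
  rw [nPauli_mul, nPauli_mul, smul_smul]
  rw [show (fun k => mul4 (g' k) (g k)) = fun k => mul4 (g k) (g' k) by
    funext k; rw [mul4_comm]]
  congr 1
  rw [← m1_sum, ← Finset.prod_mul_distrib]
  exact Finset.prod_congr rfl fun k _ => phase4_swap (g k) (g' k)

lemma list_prod_scalar (L : List (Fin n → Fin 4)) :
    ∃ c : ℂ, (L.map nPauli).prod =
      c • nPauli (fun k => chi4 ((L.map (fun g => psi4 (g k))).sum)) := by
  induction L with
  | nil =>
    refine ⟨1, ?_⟩
    simp [show (chi4 0 : Fin 4) = 0 by decide, nPauli_zero]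
  | cons g L ih =>
    obtain ⟨c, hc⟩ := ih
    refine ⟨(∏ k, phase4 (g k) (chi4 ((L.map (fun g => psi4 (g k))).sum))) * c, ?_⟩
    simp only [List.map_cons, List.prod_cons, List.sum_cons, hc]
    rw [Matrix.mul_smul, nPauli_mul, smul_smul, mul_comm]
    have hfun : (fun k => mul4 (g k) (chi4 ((L.map (fun g => psi4 (g k))).sum)))
        = fun k => chi4 (psi4 (g k) + (L.map (fun g => psi4 (g k))).sum) :=
      funext fun k => mul4_chi4 _ _
    rw [hfun]

section Symp

variable {m : Type*} [Fintype m] [DecidableEq m]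

def pairForm {N : ℕ} (x y : Fin N → ZMod 2 × ZMod 2) : ZMod 2 :=
  ∑ k, ((x k).1 * (y k).2 + (x k).2 * (y k).1)

lemma zmod2_cancel : ∀ a u v : ZMod 2, a + u + v + (u + v) = a := by decide

lemma zmod2_flip : ∀ a b x y : ZMod 2, b = a + x + y → a = b + x + y := by decide

lemma sum_single_mul (f : m → ZMod 2) (i0 : m) :
    ∑ i, (Pi.single i0 1 : m → ZMod 2) i * f i = f i0 := by
  rw [Finset.sum_eq_single i0]
  · simp
  · intro b _ hb; simp [Pi.single_apply, hb]
  · intro h; exact absurd (Finset.mem_univ i0) h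

lemma sum_single_smul {P : Type*} [AddCommMonoid P] [Module (ZMod 2) P]
    (g : m → P) (i0 : m) :
    ∑ i, (Pi.single i0 1 : m → ZMod 2) i • g i = g i0 := by
  rw [Finset.sum_eq_single i0]
  · simp
  · intro b _ hb; simp [Pi.single_apply, hb]
  · intro h; exact absurd (Finset.mem_univ i0) h

def snocLin (N : ℕ) : (Fin N → ZMod 2 × ZMod 2) →ₗ[ZMod 2] (Fin (N+1) → ZMod 2 × ZMod 2) where
  toFun x := Fin.snoc x 0
  map_add' x y := by
    funext k
    refine Fin.lastCases ?_ (fun k => ?_) k <;> simp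
  map_smul' c x := by
    funext k
    refine Fin.lastCases ?_ (fun k => ?_) k <;> simp

lemma rank_zero_eq (A : Matrix m m (ZMod 2)) (h : A.rank = 0) : A = 0 := by
  have h0 : LinearMap.range A.mulVecLin = ⊥ := by
    have := h
    rw [Matrix.rank] at this
    exact Submodule.finrank_eq_zero.mp this
  ext i j
  have : A.mulVecLin (Pi.single j 1) = 0 := by
    have hm : A.mulVecLin (Pi.single j 1) ∈ (⊥ : Submodule (ZMod 2) (m → ZMod 2)) := by
      rw [← h0]; exact LinearMap.mem_range_self _ _
    simpa using hm
  have := congrFun this i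
  simpa [Matrix.mulVecLin_apply] using this

lemma sympDecompAux : ∀ (r : ℕ) (A : Matrix m m (ZMod 2)), A.rank ≤ r →
    (∀ i j, A i j = A j i) → (∀ i, A i i = 0) →
    ∃ (N : ℕ) (ψ : m → Fin N → ZMod 2 × ZMod 2),
      (∀ i j, pairForm (ψ i) (ψ j) = A i j) ∧
      (∀ c : m → ZMod 2, (∑ i, c i • ψ i) = 0 ↔ ∀ j, ∑ i, c i * A i j = 0) ∧
      Submodule.span (ZMod 2) (Set.range ψ) = ⊤ := by
  intro r
  induction r with
  | zero =>
    intro A hr _ _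
    have hA : A = 0 := rank_zero_eq A (Nat.le_zero.mp hr)
    subst hA
    refine ⟨0, fun _ => (fun k => k.elim0), ?_, ?_, ?_⟩
    · intro i j; simp [pairForm]
    · intro c
      constructor
      · intro _ j; simp
      · intro _; funext k; exact k.elim0
    · have hsub : Subsingleton (Fin 0 → ZMod 2 × ZMod 2) :=
        ⟨fun a b => funext fun k => k.elim0⟩
      rw [Submodule.eq_top_iff']
      intro x
      have : x = 0 := Subsingleton.elim x 0
      rw [this]; exact Submodule.zero_mem _
  | succ r ih =>
    intro A hr hsymm hdiag
    by_cases hA : A = 0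
    · subst hA
      refine ⟨0, fun _ => (fun k => k.elim0), ?_, ?_, ?_⟩
      · intro i j; simp [pairForm]
      · intro c
        constructor
        · intro _ j; simp
        · intro _; funext k; exact k.elim0
      · rw [Submodule.eq_top_iff']
        intro x
        have : x = 0 := funext fun k => k.elim0
        rw [this]; exact Submodule.zero_mem _
    · -- find i0 j0 with A i0 j0 = 1
      obtain ⟨i0, j0, hij⟩ : ∃ i0 j0, A i0 j0 = 1 := by
        by_contra hc
        push_neg at hc
        apply hA
        ext i j
        have := hc i j
        have : A i j = 0 := by
          have h2 : ∀ x : ZMod 2, x ≠ 1 → x = 0 := by decide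
          exact h2 _ this
        simpa using this
      set A' : Matrix m m (ZMod 2) :=
        Matrix.of (fun i j => A i j + A i j0 * A i0 j + A i i0 * A j0 j) with hA'def
      have hA'app : ∀ i j, A' i j = A i j + A i j0 * A i0 j + A i i0 * A j0 j :=
        fun i j => rfl
      have hsymm' : ∀ i j, A' i j = A' j i := by
        intro i j
        rw [hA'app, hA'app, hsymm i j, hsymm i j0, hsymm i i0, hsymm i0 j, hsymm j0 j]
        ring
      have hdiag' : ∀ i, A' i i = 0 := by
        intro i
        rw [hA'app, hdiag i, hsymm i0 i, hsymm j0 i]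
        have : ∀ x y : ZMod 2, 0 + x * y + y * x = 0 := by decide
        exact this _ _
      have hi0row : ∀ j, A' i0 j = 0 := by
        intro j
        rw [hA'app, hij, hdiag i0]
        have : ∀ x y : ZMod 2, x + 1 * x + 0 * y = 0 := by decide
        exact this _ _
      have hj0row : ∀ j, A' j0 j = 0 := by
        intro j
        rw [hA'app, hdiag j0, hsymm j0 i0, hij]
        have : ∀ x y : ZMod 2, x + 0 * y + 1 * x = 0 := by decide
        exact this _ _
      -- sum identity
      have hsum : ∀ (c : m → ZMod 2) j, ∑ i, c i * A' i j =
          (∑ i, c i * A i j) + (∑ i, c i * A i j0) * A i0 j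
            + (∑ i, c i * A i i0) * A j0 j := by
        intro c j
        rw [Finset.sum_mul, Finset.sum_mul, ← Finset.sum_add_distrib, ← Finset.sum_add_distrib]
        apply Finset.sum_congr rfl
        intro i _
        rw [hA'app]
        ring
      -- mulVec identity
      have hmv : ∀ (c : m → ZMod 2) i, (A' *ᵥ c) i =
          (A *ᵥ c) i + A i j0 * (A *ᵥ c) i0 + A i i0 * (A *ᵥ c) j0 := by
        intro c i
        simp only [Matrix.mulVec, dotProduct]
        rw [Finset.mul_sum, Finset.mul_sum, ← Finset.sum_add_distrib, ← Finset.sum_add_distrib]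
        apply Finset.sum_congr rfl
        intro j _
        rw [hA'app]
        ring
      -- kernels
      have hkerle : LinearMap.ker A.mulVecLin ≤ LinearMap.ker A'.mulVecLin := by
        intro c hc
        rw [LinearMap.mem_ker] at hc ⊢
        funext i
        have hc' : ∀ i, (A *ᵥ c) i = 0 := fun i => congrFun hc i
        simp [Matrix.mulVecLin_apply] at hc' ⊢
        rw [hmv c i, hc' i, hc' i0, hc' j0]
        ring
      have hmem : Pi.single j0 (1 : ZMod 2) ∈ LinearMap.ker A'.mulVecLin := by
        rw [LinearMap.mem_ker]
        funext i
        simp only [Matrix.mulVecLin_apply, Matrix.mulVec_single_one, Matrix.col_apply, mul_one, Pi.zero_apply]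
        rw [hA'app, hij, hdiag j0]
        have : ∀ x y : ZMod 2, x + x * 1 + y * 0 = 0 := by decide
        exact this _ _
      have hnotmem : Pi.single j0 (1 : ZMod 2) ∉ LinearMap.ker A.mulVecLin := by
        rw [LinearMap.mem_ker]
        intro hc
        have := congrFun hc i0
        simp only [Matrix.mulVecLin_apply, Matrix.mulVec_single_one, Matrix.col_apply, mul_one, Pi.zero_apply] at this
        rw [hij] at this
        exact one_ne_zero this
      have hlt : LinearMap.ker A.mulVecLin < LinearMap.ker A'.mulVecLin :=
        lt_of_le_of_ne hkerle (fun he => hnotmem (he ▸ hmem))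
      have hkerdim : Module.finrank (ZMod 2) (LinearMap.ker A.mulVecLin)
          < Module.finrank (ZMod 2) (LinearMap.ker A'.mulVecLin) :=
        Submodule.finrank_lt_finrank_of_lt hlt
      have hrankA : A.rank + Module.finrank (ZMod 2) (LinearMap.ker A.mulVecLin)
          = Fintype.card m := by
        rw [Matrix.rank]
        rw [LinearMap.finrank_range_add_finrank_ker A.mulVecLin]
        simp [Module.finrank_pi]
      have hrankA' : A'.rank + Module.finrank (ZMod 2) (LinearMap.ker A'.mulVecLin)
          = Fintype.card m := by
        rw [Matrix.rank]
        rw [LinearMap.finrank_range_add_finrank_ker A'.mulVecLin]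
        simp [Module.finrank_pi]
      have hr' : A'.rank ≤ r := by omega
      obtain ⟨N', ψ', hform', hker', hspan'⟩ := ih A' hr' hsymm' hdiag'
      -- ψ' i0 = 0 and ψ' j0 = 0
      have hpsi'i0 : ψ' i0 = 0 := by
        have h1 : ∀ j, ∑ i, (Pi.single i0 1 : m → ZMod 2) i * A' i j = 0 := by
          intro j; rw [sum_single_mul]; exact hi0row j
        have h2 := (hker' (Pi.single i0 1)).mpr h1
        rwa [sum_single_smul] at h2
      have hpsi'j0 : ψ' j0 = 0 := by
        have h1 : ∀ j, ∑ i, (Pi.single j0 1 : m → ZMod 2) i * A' i j = 0 := by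
          intro j; rw [sum_single_mul]; exact hj0row j
        have h2 := (hker' (Pi.single j0 1)).mpr h1
        rwa [sum_single_smul] at h2
      -- construct ψ
      refine ⟨N' + 1, fun i => Fin.snoc (ψ' i) ((A i j0, A i i0)), ?_, ?_, ?_⟩
      · -- form
        intro i j
        have hsplit : pairForm (Fin.snoc (ψ' i) ((A i j0, A i i0)) : Fin (N'+1) → ZMod 2 × ZMod 2)
            (Fin.snoc (ψ' j) ((A j j0, A j i0)))
            = pairForm (ψ' i) (ψ' j) + (A i j0 * A j i0 + A i i0 * A j j0) := by
          rw [pairForm, Fin.sum_univ_castSucc]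
          simp [Fin.snoc_castSucc, Fin.snoc_last, pairForm]
        rw [hsplit, hform', hA'app, hsymm j i0, hsymm j j0]
        have : ∀ a u v : ZMod 2, a + u + v + (u + v) = a := zmod2_cancel
        rw [show A i j0 * A i0 j + A i i0 * A j0 j
            = A i j0 * A i0 j + A i i0 * A j0 j from rfl]
        exact zmod2_cancel (A i j) (A i j0 * A i0 j) (A i i0 * A j0 j)
      · -- kernel
        intro c
        have hsplit : (∑ i, c i • (Fin.snoc (ψ' i) ((A i j0, A i i0)) : Fin (N'+1) → ZMod 2 × ZMod 2)) = 0
            ↔ (∑ i, c i • ψ' i = 0) ∧ (∑ i, c i * A i j0 = 0) ∧ (∑ i, c i * A i i0 = 0) := by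
          constructor
          · intro h
            have happ : ∀ k, (∑ i, c i • (Fin.snoc (ψ' i) ((A i j0, A i i0))
                : Fin (N'+1) → ZMod 2 × ZMod 2)) k = 0 := fun k => congrFun h k
            refine ⟨funext fun k => ?_, ?_, ?_⟩
            · have := happ k.castSucc
              simpa [Finset.sum_apply, Fin.snoc_castSucc] using this
            · have := happ (Fin.last N')
              simp only [Finset.sum_apply, Pi.smul_apply, Fin.snoc_last, Pi.zero_apply] at this
              have h1 := congrArg Prod.fst this
              simpa [Prod.fst_sum] using h1
            · have := happ (Fin.last N')
              simp only [Finset.sum_apply, Pi.smul_apply, Fin.snoc_last, Pi.zero_apply] at this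
              have h1 := congrArg Prod.snd this
              simpa [Prod.snd_sum] using h1
          · rintro ⟨h1, h2, h3⟩
            funext k
            rw [Finset.sum_apply]
            refine Fin.lastCases ?_ (fun k => ?_) k
            · simp only [Pi.smul_apply, Fin.snoc_last]
              have : (∑ i, c i • ((A i j0, A i i0) : ZMod 2 × ZMod 2)) = 0 := by
                rw [Prod.ext_iff]
                constructor
                · simpa [Prod.fst_sum] using h2
                · simpa [Prod.snd_sum] using h3
              simpa using this
            · simp only [Pi.smul_apply, Fin.snoc_castSucc]
              have := congrFun h1 k
              simpa [Finset.sum_apply] using this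
        rw [hsplit, hker' c]
        constructor
        · rintro ⟨h1, h2, h3⟩ j
          have := hsum c j
          rw [h2, h3, h1 j] at this
          simpa using this.symm
        · intro h
          refine ⟨fun j => ?_, h j0, h i0⟩
          rw [hsum c j, h j, h j0, h i0]
          ring
      · -- span
        set ψ : m → Fin (N'+1) → ZMod 2 × ZMod 2 :=
          fun i => Fin.snoc (ψ' i) ((A i j0, A i i0)) with hψdef
        set S := Submodule.span (ZMod 2) (Set.range ψ) with hSdef
        have hE1 : ψ i0 = Fin.snoc (0 : Fin N' → ZMod 2 × ZMod 2) (((1 : ZMod 2), (0 : ZMod 2))) := by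
          rw [hψdef]
          simp only [hpsi'i0, hij, hdiag i0]
        have hE2 : ψ j0 = Fin.snoc (0 : Fin N' → ZMod 2 × ZMod 2) (((0 : ZMod 2), (1 : ZMod 2))) := by
          rw [hψdef]
          simp only [hpsi'j0, hdiag j0, hsymm j0 i0, hij]
        have hJmem : ∀ i, (snocLin N') (ψ' i) ∈ S := by
          intro i
          have key : (snocLin N') (ψ' i)
              = ψ i + A i j0 • ψ i0 + A i i0 • ψ j0 := by
            funext k
            refine Fin.lastCases ?_ (fun k => ?_) k
            · simp only [snocLin, LinearMap.coe_mk, AddHom.coe_mk, Pi.add_apply,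
                Pi.smul_apply, hE1, hE2, hψdef, Fin.snoc_last]
              rw [hsymm j0 i0, hij, hdiag i0, hdiag j0]
              have : ∀ x y : ZMod 2,
                  (0 : ZMod 2 × ZMod 2) = (x, y) + x • ((1 : ZMod 2), (0 : ZMod 2))
                    + y • ((0 : ZMod 2), (1 : ZMod 2)) := by decide
              exact this _ _
            · simp [snocLin, hE1, hE2, hψdef, hpsi'i0, hpsi'j0, Fin.snoc_castSucc]
          rw [key]
          refine Submodule.add_mem _ (Submodule.add_mem _ ?_ ?_) ?_
          · exact Submodule.subset_span ⟨i, rfl⟩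
          · exact Submodule.smul_mem _ _ (Submodule.subset_span ⟨i0, rfl⟩)
          · exact Submodule.smul_mem _ _ (Submodule.subset_span ⟨j0, rfl⟩)
        rw [Submodule.eq_top_iff']
        intro z
        have hz : z = (snocLin N') (Fin.init z)
            + (z (Fin.last N')).1 • ψ i0 + (z (Fin.last N')).2 • ψ j0 := by
          funext k
          refine Fin.lastCases ?_ (fun k => ?_) k
          · simp only [snocLin, LinearMap.coe_mk, AddHom.coe_mk, Pi.add_apply,
              Pi.smul_apply, hE1, hE2, Fin.snoc_last]
            have : ∀ p : ZMod 2 × ZMod 2,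
                p = 0 + p.1 • ((1 : ZMod 2), (0 : ZMod 2))
                  + p.2 • ((0 : ZMod 2), (1 : ZMod 2)) := by decide
            exact this _
          · simp [snocLin, hE1, hE2, Fin.snoc_castSucc, Fin.init]
        rw [hz]
        refine Submodule.add_mem _ (Submodule.add_mem _ ?_ ?_) ?_
        · have hinit : Fin.init z ∈ Submodule.span (ZMod 2) (Set.range ψ') := by
            rw [hspan']; trivial
          have hmap : Submodule.map (snocLin N') (Submodule.span (ZMod 2) (Set.range ψ')) ≤ S := by
            rw [Submodule.map_span]
            apply Submodule.span_le.mpr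
            rintro x ⟨y, ⟨i, rfl⟩, rfl⟩
            exact hJmem i
          exact hmap (Submodule.mem_map_of_mem hinit)
        · exact Submodule.smul_mem _ _ (Submodule.subset_span ⟨i0, rfl⟩)
        · exact Submodule.smul_mem _ _ (Submodule.subset_span ⟨j0, rfl⟩)

end Symp


lemma rank_eq_two_mul {m : Type*} [Fintype m] [DecidableEq m] {N : ℕ}
    (A : Matrix m m (ZMod 2)) (hsymm : ∀ i j, A i j = A j i)
    (ψ : m → Fin N → ZMod 2 × ZMod 2)
    (hker : ∀ c : m → ZMod 2, (∑ i, c i • ψ i) = 0 ↔ ∀ j, ∑ i, c i * A i j = 0)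
    (hspan : Submodule.span (ZMod 2) (Set.range ψ) = ⊤) :
    A.rank = 2 * N := by
  set L := Fintype.linearCombination (ZMod 2) ψ with hLdef
  have hkerL : LinearMap.ker L = LinearMap.ker A.mulVecLin := by
    ext c
    rw [LinearMap.mem_ker, LinearMap.mem_ker]
    have hLc : L c = ∑ i, c i • ψ i := rfl
    rw [hLc, hker c]
    constructor
    · intro hc
      funext i
      show (A *ᵥ c) i = 0
      have : (A *ᵥ c) i = ∑ j, c j * A j i := by
        simp only [Matrix.mulVec, dotProduct]
        exact Finset.sum_congr rfl fun j _ => by rw [hsymm i j]; ring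
      rw [this]
      exact hc i
    · intro hc j
      have h0 : ∀ i, (A.mulVecLin c) i = 0 := fun i => congrFun hc i
      have := h0 j
      simp only [Matrix.mulVecLin_apply, Matrix.mulVec, dotProduct] at this
      rw [← this]
      exact Finset.sum_congr rfl fun i _ => by rw [hsymm j i]; ring
  have hrangeL : LinearMap.range L = ⊤ := by
    rw [hLdef, Fintype.range_linearCombination, hspan]
  have h1 := LinearMap.finrank_range_add_finrank_ker L
  have h2 := LinearMap.finrank_range_add_finrank_ker A.mulVecLin
  rw [hrangeL, hkerL] at h1
  have hcodom : Module.finrank (ZMod 2) (Fin N → ZMod 2 × ZMod 2) = 2 * N := by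
    rw [Module.finrank_pi_fintype]
    have : ∀ k : Fin N, Module.finrank (ZMod 2) (ZMod 2 × ZMod 2) = 2 := by
      intro k
      rw [Module.finrank_prod, Module.finrank_self]
    simp only [Module.finrank_prod, Module.finrank_self, Finset.sum_const, Finset.card_univ,
      Fintype.card_fin, smul_eq_mul]
    ring
  have hdom : Module.finrank (ZMod 2) (m → ZMod 2) = Fintype.card m := by
    simp [Module.finrank_pi]
  rw [finrank_top, hcodom, hdom] at h1
  rw [hdom] at h2
  rw [Matrix.rank]
  omega

lemma list_sq {n : ℕ} (l : List (QMat n))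
    (hcomm : ∀ x ∈ l, ∀ y ∈ l, x * y = y * x) (hsq : ∀ x ∈ l, x * x = 1) :
    l.prod * l.prod = 1 := by
  induction l with
  | nil => simp
  | cons a t ih =>
    have hpa : t.prod * a = a * t.prod := by
      have hcom : Commute a t.prod := Commute.list_prod_right t a
        (fun x hx => hcomm a (by simp) x (by simp [hx]))
      exact hcom.symm.eq
    have hpp : t.prod * t.prod = 1 :=
      ih (fun x hx y hy => hcomm x (by simp [hx]) y (by simp [hy]))
        (fun x hx => hsq x (by simp [hx]))
    have hsqa : a * a = 1 := hsq a (by simp)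
    rw [List.prod_cons]
    calc a * t.prod * (a * t.prod) = a * (t.prod * a) * t.prod := by
          rw [mul_assoc a t.prod (a * t.prod), ← mul_assoc t.prod a t.prod, ← mul_assoc]
      _ = (a * a) * (t.prod * t.prod) := by
          rw [hpa, ← mul_assoc a a t.prod, mul_assoc (a*a) t.prod t.prod]
      _ = 1 := by rw [hpp, hsqa, one_mul]

lemma idN_one {n : ℕ} : idN n = 1 := by
  have h : idN n = nPauli (fun _ => 0) := by
    rw [idN, show (fun _ : Fin n => (⟨0, by omega⟩ : Fin 4)) = (fun _ => 0) from
      funext fun _ => by decide]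
  rw [h, nPauli_zero]

lemma iteOneZero_eq_iteOneZero {P Q : Prop} [Decidable P] [Decidable Q]
    (h : (if P then (1 : ZMod 2) else 0) = (if Q then 1 else 0)) : P ↔ Q := by
  by_cases hP : P <;> by_cases hQ : Q <;> simp_all

/-- If the context matrix times the anticommutation matrix of a
hypergram is zero over 𝔽₂, then the rank `r` of the anticommutation matrix is
even and there exists an `(r/2)`-qubit Pauli assignment of the hypergram. -/
theorem matrix_condition_implies_assignable
    (V : Finset ℕ) (H G : Finset (Finset ℕ)) (hgram : IsHypergram V H G)
    (hzero : contextMatrix V H * anticommMatrix V G = 0) :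
    Even (anticommMatrix V G).rank ∧
    ∃ α : ℕ → QMat ((anticommMatrix V G).rank / 2),
      IsPauliAssignment V H G ((anticommMatrix V G).rank / 2) α := by
  obtain ⟨hVne, hHsub, hHcov, hGe, hGcov, hred, hnosub⟩ := hgram
  set A := anticommMatrix V G with hAdef
  have hAapp : ∀ i j : {v // v ∈ V}, A i j = if ({i.1, j.1} : Finset ℕ) ∈ G then 1 else 0 :=
    fun i j => rfl
  have hsymm : ∀ i j, A i j = A j i := by
    intro i j; rw [hAapp, hAapp, Finset.pair_comm]
  have hdiag : ∀ i, A i i = 0 := by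
    intro i
    rw [hAapp, if_neg]
    intro hmem
    have h2 := (hGe _ hmem).2
    simp at h2
  obtain ⟨N, ψ, hform, hker, hspan⟩ := sympDecompAux A.rank A le_rfl hsymm hdiag
  have hrank : A.rank = 2 * N := rank_eq_two_mul A hsymm ψ hker hspan
  refine ⟨⟨N, by omega⟩, ?_⟩
  have hdiv : A.rank / 2 = N := by omega
  rw [hdiv]
  -- the Pauli assignment
  set g : {v // v ∈ V} → Fin N → Fin 4 := fun i k => chi4 (ψ i k) with hgdef
  set gOf : ℕ → Fin N → Fin 4 :=
    (fun x => if hx : x ∈ V then g ⟨x, hx⟩ else (fun _ => 0)) with hgOfdef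
  have hgOfV : ∀ (v : ℕ) (hv : v ∈ V), gOf v = g ⟨v, hv⟩ := by
    intro v hv; rw [hgOfdef]; simp [hv]
  have hpsig : ∀ (i : {v // v ∈ V}) (k : Fin N), psi4 (g i k) = ψ i k := by
    intro i k; rw [hgdef]; exact psi4_chi4 _
  have hepsg : ∀ (i j : {v // v ∈ V}), (∑ k, eps4 (g i k) (g j k)) = A i j := by
    intro i j
    rw [← hform i j, pairForm]
    apply Finset.sum_congr rfl
    intro k _
    rw [eps4, hpsig, hpsig]
  have hpsieq : ∀ (i j : {v // v ∈ V}), g i = g j → ψ i = ψ j := by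
    intro i j hg
    funext k
    rw [← hpsig i k, ← hpsig j k, hg]
  refine ⟨fun x => nPauli (gOf x), ?_, ?_, ?_, ?_, ?_⟩
  · -- Pauli observables
    intro v hv
    exact ⟨gOf v, rfl⟩
  · -- not identity
    intro v hv heq
    replace heq : nPauli (gOf v) = idN N := heq
    rw [idN_one] at heq
    have h0 : gOf v = fun _ => 0 := nPauli_inj _ _ (by rw [heq, nPauli_zero])
    rw [hgOfV v hv] at h0
    have hψ0 : ψ ⟨v, hv⟩ = 0 := by
      funext k
      rw [← hpsig ⟨v, hv⟩ k, congrFun h0 k]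
      show psi4 0 = 0
      decide
    -- v has a neighbour
    obtain ⟨e, heG, hve⟩ := hGcov v hv
    obtain ⟨a, b, hab, hePair⟩ := Finset.card_eq_two.mp (hGe e heG).2
    have heV := (hGe e heG).1
    have hve' : v = a ∨ v = b := by
      rw [hePair] at hve
      simpa using hve
    obtain ⟨u, hu_ne, hpairG, huV⟩ : ∃ u, u ≠ v ∧ ({v, u} : Finset ℕ) ∈ G ∧ u ∈ V := by
      rcases hve' with rfl | rfl
      · exact ⟨b, fun hbv => hab hbv.symm, by rwa [← hePair], heV (by rw [hePair]; simp)⟩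
      · refine ⟨a, fun hav => hab hav, ?_, heV (by rw [hePair]; simp)⟩
        rw [Finset.pair_comm]
        rwa [← hePair]
    have h1 : A ⟨v, hv⟩ ⟨u, huV⟩ = 1 := by rw [hAapp]; exact if_pos hpairG
    have h0' : A ⟨v, hv⟩ ⟨u, huV⟩ = 0 := by
      rw [← hform]
      simp [pairForm, hψ0]
    rw [h1] at h0'
    exact one_ne_zero h0'
  · -- injectivity
    intro v1 hv1 v2 hv2 heq
    replace heq : nPauli (gOf v1) = nPauli (gOf v2) := heq
    have hg12 : gOf v1 = gOf v2 := nPauli_inj _ _ heq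
    rw [hgOfV v1 hv1, hgOfV v2 hv2] at hg12
    have hψ12 : ψ ⟨v1, hv1⟩ = ψ ⟨v2, hv2⟩ := hpsieq _ _ hg12
    apply hred v1 hv1 v2 hv2
    intro u hu
    have hAeq : A ⟨v1, hv1⟩ ⟨u, hu⟩ = A ⟨v2, hv2⟩ ⟨u, hu⟩ := by
      rw [← hform, ← hform, hψ12]
    rw [hAapp, hAapp] at hAeq
    exact iteOneZero_eq_iteOneZero hAeq
  · -- anticommutation
    intro v1 hv1 v2 hv2 hne
    show nPauli (gOf v1) * nPauli (gOf v2) = -(nPauli (gOf v2) * nPauli (gOf v1))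
      ↔ ({v1, v2} : Finset ℕ) ∈ G
    have hswap := nPauli_swap (gOf v1) (gOf v2)
    rw [hgOfV v1 hv1, hgOfV v2 hv2] at hswap ⊢
    rw [hepsg ⟨v1, hv1⟩ ⟨v2, hv2⟩] at hswap
    by_cases hmem : ({v1, v2} : Finset ℕ) ∈ G
    · apply iff_of_true _ hmem
      rw [hAapp] at hswap
      rw [if_pos hmem] at hswap
      rw [hswap]
      have hm1 : m1 1 = -1 := by norm_num [m1]
      rw [hm1, neg_smul, one_smul]
    · apply iff_of_false _ hmem
      rw [hAapp, if_neg hmem] at hswap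
      have hm1 : m1 0 = 1 := by norm_num [m1]
      rw [hm1, one_smul] at hswap
      intro hc
      rw [← hswap] at hc
      have hzero' : nPauli (g ⟨v1, hv1⟩) * nPauli (g ⟨v2, hv2⟩) = 0 := by
        have h2 : nPauli (g ⟨v1, hv1⟩) * nPauli (g ⟨v2, hv2⟩)
            + nPauli (g ⟨v1, hv1⟩) * nPauli (g ⟨v2, hv2⟩) = 0 := by
          nth_rewrite 1 [hc]; exact neg_add_cancel _
        have h3 : (2 : ℂ) • (nPauli (g ⟨v1, hv1⟩) * nPauli (g ⟨v2, hv2⟩)) = 0 := by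
          rw [two_smul]; exact h2
        have := smul_eq_zero.mp h3
        rcases this with h | h
        · norm_num at h
        · exact h
      have hone : nPauli (g ⟨v1, hv1⟩) * nPauli (g ⟨v2, hv2⟩)
          * (nPauli (g ⟨v2, hv2⟩) * nPauli (g ⟨v1, hv1⟩)) = 1 := by
        rw [mul_assoc, ← mul_assoc (nPauli (g ⟨v2, hv2⟩)), nPauli_sq, one_mul, nPauli_sq]
      rw [hzero', zero_mul] at hone
      have h9 : (0 : QMat N) (fun _ => 0) (fun _ => 0)
          = (1 : QMat N) (fun _ => 0) (fun _ => 0) := by rw [hone]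
      have h10 : (0 : ℂ) = 1 := by simpa using h9
      exact zero_ne_one h10
  · -- hyperedges
    intro h hH
    have hhV : h ⊆ V := (hHsub h hH).1
    set L : List ℕ := h.sort (· ≤ ·) with hLdef
    have hmemL : ∀ x ∈ L, x ∈ h := fun x hx => (Finset.mem_sort _).1 hx
    have hprodeq : natFinsetProd h (fun x => nPauli (gOf x))
        = ((L.map gOf).map nPauli).prod := by
      rw [natFinsetProd, List.map_map]
      rfl
    obtain ⟨c, hc⟩ := list_prod_scalar (L.map gOf)
    -- the ψ-sum over the hyperedge vanishes
    set c0 : {v // v ∈ V} → ZMod 2 := fun i => if i.1 ∈ h then 1 else 0 with hc0def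
    have hcol : ∀ j, ∑ i, c0 i * A i j = 0 := by
      intro j
      have hz : (contextMatrix V H * anticommMatrix V G) ⟨h, hH⟩ j = 0 := by
        rw [hzero]; rfl
      rw [Matrix.mul_apply] at hz
      rw [← hz]
      apply Finset.sum_congr rfl
      intro i _
      rfl
    have hv0 : ∑ i, c0 i • ψ i = 0 := (hker c0).mpr hcol
    have hsum0 : ∀ k, ((L.map gOf).map (fun gg => psi4 (gg k))).sum = 0 := by
      intro k
      rw [List.map_map]
      have hlist : ((L.map (fun v => psi4 (gOf v k)))).sum = ∑ v ∈ h, psi4 (gOf v k) := by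
        rw [Finset.sum]
        rw [← Finset.sort_eq (s := h) (r := (· ≤ ·))]
        rfl
      show ((L.map (fun v => psi4 (gOf v k)))).sum = 0
      rw [hlist]
      have hstep : ∑ v ∈ h, psi4 (gOf v k) = ∑ i, c0 i • ψ i k := by
        rw [show (∑ i, c0 i • ψ i k) = ∑ i, (if (i : {v // v ∈ V}).1 ∈ h then ψ i k else 0) by
          apply Finset.sum_congr rfl
          intro i _
          by_cases hih : i.1 ∈ h <;> simp [hc0def, hih]]
        rw [← Finset.sum_filter]
        refine (Finset.sum_bij (fun (i : {v // v ∈ V}) _ => i.1) ?_ ?_ ?_ ?_).symm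
        · intro a ha
          simp only [Finset.mem_filter] at ha
          exact ha.2
        · intro a1 ha1 a2 ha2 hee
          exact Subtype.ext hee
        · intro b hb
          refine ⟨⟨b, hhV hb⟩, ?_, rfl⟩
          simp [hb]
        · intro a ha
          rw [hgOfV a.1 a.2, hpsig]
      rw [hstep]
      have := congrFun hv0 k
      rw [Finset.sum_apply] at this
      exact this
    have hnp0 : (fun k => chi4 ((((L.map gOf)).map (fun gg => psi4 (gg k))).sum))
        = (fun _ : Fin N => (0 : Fin 4)) := by
      funext k
      rw [hsum0 k]
      decide
    rw [hnp0, nPauli_zero] at hc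
    -- squares to one
    have hM2 : ((L.map gOf).map nPauli).prod * ((L.map gOf).map nPauli).prod = 1 := by
      apply list_sq
      · intro x hx y hy
        obtain ⟨vx, hvx, rfl⟩ : ∃ v ∈ L, nPauli (gOf v) = x := by
          rw [List.map_map] at hx
          obtain ⟨v, hv, hvx⟩ := List.mem_map.mp hx
          exact ⟨v, hv, hvx⟩
        obtain ⟨vy, hvy, rfl⟩ : ∃ v ∈ L, nPauli (gOf v) = y := by
          rw [List.map_map] at hy
          obtain ⟨v, hv, hvy⟩ := List.mem_map.mp hy
          exact ⟨v, hv, hvy⟩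
        have hvxh := hmemL _ hvx
        have hvyh := hmemL _ hvy
        by_cases hxy : vx = vy
        · rw [hxy]
        · have hnotG : ({vx, vy} : Finset ℕ) ∉ G := by
            intro hmem
            exact hnosub _ hmem h hH (by
              intro z hz
              simp only [Finset.mem_insert, Finset.mem_singleton] at hz
              rcases hz with rfl | rfl
              · exact hvxh
              · exact hvyh)
          have hswap := nPauli_swap (gOf vx) (gOf vy)
          rw [hgOfV vx (hhV hvxh), hgOfV vy (hhV hvyh)] at hswap
          rw [hepsg] at hswap
          rw [hAapp, if_neg hnotG] at hswap
          rw [show m1 0 = 1 by norm_num [m1], one_smul] at hswap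
          rw [hgOfV vx (hhV hvxh), hgOfV vy (hhV hvyh)]
          exact hswap
      · intro x hx
        obtain ⟨v, hv, rfl⟩ : ∃ v ∈ L, nPauli (gOf v) = x := by
          rw [List.map_map] at hx
          obtain ⟨v, hv, hvx⟩ := List.mem_map.mp hx
          exact ⟨v, hv, hvx⟩
        exact nPauli_sq _
    rw [hc] at hM2
    have hcc : c * c = 1 := by
      rw [smul_mul_smul_comm, one_mul] at hM2
      have h9 : ((c * c) • (1 : QMat N)) (fun _ => 0) (fun _ => 0)
          = (1 : QMat N) (fun _ => 0) (fun _ => 0) := by rw [hM2]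
      simpa [Matrix.smul_apply, Matrix.one_apply_eq] using h9
    rcases mul_self_eq_one_iff.mp hcc with hc1 | hc1
    · left
      rw [idN_one, hprodeq, hc, hc1, one_smul]
    · right
      rw [idN_one, hprodeq, hc, hc1, neg_smul, one_smul]

end
end
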